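/- The Huang algorithm started at zero computes the minimum-norm solution: under the Huang recursion with iterates x₁ = 0 and x_{j+1} = x_j − ((a_jᵀ x_j − b_j)/d_j) p_j for j = 1,…,m, the final iterate satisfies A x_{m+1} = b, x_{m+1} ∈ Range(Aᵀ), and ‖x_{m+1}‖ ≤ ‖x‖ for every x ∈ ℝⁿ with A x = b. -/

import Mathlib

open Matrix RealInnerProductSpace

lemma huang_aux_dot {k l : ℕ} (M : Matrix (Fin k) (Fin l) ℝ) (u : Fin l → ℝ)
    (v : Fin k → ℝ) : (M *ᵥ u) ⬝ᵥ v = u ⬝ᵥ (Mᵀ *ᵥ v) := by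
  rw [dotProduct_comm, dotProduct_mulVec, ← mulVec_transpose, dotProduct_comm]

lemma huang_aux_symm_dot {n : ℕ} (M : Matrix (Fin n) (Fin n) ℝ) (hM : Mᵀ = M)
    (u v : Fin n → ℝ) : (M *ᵥ u) ⬝ᵥ v = u ⬝ᵥ (M *ᵥ v) := by
  rw [dotProduct_comm, dotProduct_mulVec, ← mulVec_transpose, hM, dotProduct_comm]

lemma huang_aux_vecMulVec {n : ℕ} (w₁ w₂ v : Fin n → ℝ) :
    vecMulVec w₁ w₂ *ᵥ v = (w₂ ⬝ᵥ v) • w₁ := by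
  ext i
  simp only [vecMulVec_apply, mulVec, dotProduct, Pi.smul_apply, smul_eq_mul, Finset.sum_mul]
  exact Finset.sum_congr rfl fun j _ => by ring

/-- The Huang algorithm started at zero computes the minimum-norm solution of a
compatible system `A x = b`: the final iterate `x (m+1)` solves the system, lies
in `Range Aᵀ`, and has minimal Euclidean norm among all solutions. -/
theorem huang_computes_min_norm_solution
    (m n : ℕ) (A : Matrix (Fin m) (Fin n) ℝ) (b : Fin m → ℝ)
    (a : ℕ → Fin n → ℝ) (ha : ∀ j : Fin m, a ((j : ℕ) + 1) = A j)
    (β : ℕ → ℝ) (hβ : ∀ j : Fin m, β ((j : ℕ) + 1) = b j)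
    (H : ℕ → Matrix (Fin n) (Fin n) ℝ) (p : ℕ → Fin n → ℝ)
    (x : ℕ → Fin n → ℝ)
    (hH1 : H 1 = 1)
    (hp : ∀ j, 1 ≤ j → j ≤ m → p j = H j *ᵥ a j)
    (hd : ∀ j, 1 ≤ j → j ≤ m → a j ⬝ᵥ p j ≠ 0)
    (hupd : ∀ j, 1 ≤ j → j ≤ m →
      H (j + 1) = H j - (a j ⬝ᵥ p j)⁻¹ • vecMulVec (p j) (p j))
    (hx1 : x 1 = 0)
    (hx : ∀ j, 1 ≤ j → j ≤ m →
      x (j + 1) = x j - ((a j ⬝ᵥ x j - β j) / (a j ⬝ᵥ p j)) • p j)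
    (hcompat : ∃ x' : Fin n → ℝ, A *ᵥ x' = b) :
    A *ᵥ x (m + 1) = b ∧
    (∃ u : Fin m → ℝ, x (m + 1) = Aᵀ *ᵥ u) ∧
    (∀ x' : Fin n → ℝ, A *ᵥ x' = b →
      ‖(EuclideanSpace.equiv (Fin n) ℝ).symm (x (m + 1))‖ ≤
        ‖(EuclideanSpace.equiv (Fin n) ℝ).symm x'‖) := by
  classical
  set R : Submodule ℝ (Fin n → ℝ) := LinearMap.range (Matrix.mulVecLin Aᵀ) with hRdef
  -- rows of A are in R
  have haR : ∀ j, 1 ≤ j → j ≤ m → a j ∈ R := by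
    intro j h1 h2
    have hj : j - 1 < m := by omega
    refine ⟨Pi.single ⟨j - 1, hj⟩ 1, ?_⟩
    have := ha ⟨j - 1, hj⟩
    simp only [Matrix.mulVecLin_apply]
    rw [show (((⟨j - 1, hj⟩ : Fin m) : ℕ) + 1) = j by simp; omega] at this
    rw [this]
    ext k
    simp [mulVec_single]
  -- symmetry of H j
  have hsymm : ∀ j, 1 ≤ j → j ≤ m + 1 → (H j)ᵀ = H j := by
    intro j h1
    induction j, h1 using Nat.le_induction with
    | base => intro _; rw [hH1, transpose_one]
    | succ j hj ih =>
      intro h2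
      have hjm : j ≤ m := by omega
      rw [hupd j hj hjm, transpose_sub, transpose_smul, ih (by omega)]
      congr 1
      ext i k
      simp [vecMulVec_apply, mul_comm]
  -- key invariant: H j kills the previous rows
  have hHa : ∀ j, 1 ≤ j → j ≤ m + 1 → ∀ i, 1 ≤ i → i < j → H j *ᵥ a i = 0 := by
    intro j h1
    induction j, h1 using Nat.le_induction with
    | base => intro _ i h1i h2i; omega
    | succ j hj ih =>
      intro h2 i h1i h2i
      have hjm : j ≤ m := by omega
      rw [hupd j hj hjm, sub_mulVec, smul_mulVec, huang_aux_vecMulVec]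
      rcases eq_or_lt_of_le (Nat.lt_succ_iff.mp h2i) with rfl | hlt
      · have hpj : p i = H i *ᵥ a i := hp i hj hjm
        have : p i ⬝ᵥ a i = a i ⬝ᵥ p i := dotProduct_comm _ _
        rw [this, ← hpj, smul_smul, inv_mul_cancel₀ (hd i hj hjm), one_smul, sub_eq_zero]
      · have h0 : H j *ᵥ a i = 0 := ih (by omega) i h1i hlt
        have hdot : p j ⬝ᵥ a i = 0 := by
          rw [hp j hj hjm, huang_aux_symm_dot (H j) (hsymm j hj (by omega)) (a j) (a i), h0,
            dotProduct_zero]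
        rw [h0, hdot, zero_smul, smul_zero, sub_zero]
  -- the iterates solve all previous equations
  have hsolve : ∀ j, 1 ≤ j → j ≤ m + 1 → ∀ i, 1 ≤ i → i < j → a i ⬝ᵥ x j = β i := by
    intro j h1
    induction j, h1 using Nat.le_induction with
    | base => intro _ i h1i h2i; omega
    | succ j hj ih =>
      intro h2 i h1i h2i
      have hjm : j ≤ m := by omega
      rw [hx j hj hjm, dotProduct_sub, dotProduct_smul, smul_eq_mul]
      rcases eq_or_lt_of_le (Nat.lt_succ_iff.mp h2i) with rfl | hlt
      · rw [div_mul_cancel₀ _ (hd i hj hjm)]; ring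
      · have hdot : a i ⬝ᵥ p j = 0 := by
          rw [hp j hj hjm, ← huang_aux_symm_dot (H j) (hsymm j hj (by omega)) (a i) (a j),
            hHa j hj (by omega) i h1i hlt, zero_dotProduct]
        rw [hdot, mul_zero, sub_zero, ih (by omega) i h1i hlt]
  -- range invariant : v - H j v ∈ R, hence p j ∈ R
  have hrange : ∀ j, 1 ≤ j → j ≤ m + 1 → ∀ v, v - H j *ᵥ v ∈ R := by
    intro j h1
    induction j, h1 using Nat.le_induction with
    | base => intro _ v; rw [hH1, one_mulVec, sub_self]; exact R.zero_mem
    | succ j hj ih =>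
      intro h2 v
      have hjm : j ≤ m := by omega
      have hpR : p j ∈ R := by
        have h1 : a j - H j *ᵥ a j ∈ R := ih (by omega) (a j)
        have := R.sub_mem (haR j hj hjm) h1
        simpa [hp j hj hjm] using this
      rw [hupd j hj hjm, sub_mulVec, smul_mulVec, huang_aux_vecMulVec]
      have : v - (H j *ᵥ v - (a j ⬝ᵥ p j)⁻¹ • (p j ⬝ᵥ v) • p j)
          = (v - H j *ᵥ v) + (a j ⬝ᵥ p j)⁻¹ • (p j ⬝ᵥ v) • p j := by abel
      rw [this]
      exact R.add_mem (ih (by omega) v) (R.smul_mem _ (R.smul_mem _ hpR))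
  -- the iterates lie in R
  have hxR : ∀ j, 1 ≤ j → j ≤ m + 1 → x j ∈ R := by
    intro j h1
    induction j, h1 using Nat.le_induction with
    | base => intro _; rw [hx1]; exact R.zero_mem
    | succ j hj ih =>
      intro h2
      have hjm : j ≤ m := by omega
      have hpR : p j ∈ R := by
        have h1 : a j - H j *ᵥ a j ∈ R := hrange j hj (by omega) (a j)
        have := R.sub_mem (haR j hj hjm) h1
        simpa [hp j hj hjm] using this
      rw [hx j hj hjm]
      exact R.sub_mem (ih (by omega)) (R.smul_mem _ hpR)
  -- first conclusion
  have hsol : A *ᵥ x (m + 1) = b := by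
    ext i
    have h1 : (1 : ℕ) ≤ (i : ℕ) + 1 := le_add_self
    have h2 : (i : ℕ) + 1 < m + 1 := by omega
    have := hsolve (m + 1) (by omega) le_rfl ((i : ℕ) + 1) h1 h2
    rw [ha i, hβ i] at this
    simpa [mulVec, dotProduct] using this
  obtain ⟨u, hu⟩ := hxR (m + 1) (by omega) le_rfl
  have hu' : x (m + 1) = Aᵀ *ᵥ u := by rw [← hu]; rfl
  refine ⟨hsol, ⟨u, hu'⟩, ?_⟩
  -- minimum norm
  intro x' hx'
  set Y := (EuclideanSpace.equiv (Fin n) ℝ).symm (x (m + 1)) with hY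
  set X := (EuclideanSpace.equiv (Fin n) ℝ).symm x' with hX
  have hinner : (inner ℝ Y (X - Y) : ℝ) = 0 := by
    have : (inner ℝ Y (X - Y) : ℝ) = x (m + 1) ⬝ᵥ (x' - x (m + 1)) := by
      simp [PiLp.inner_apply, hY, hX, dotProduct, Pi.sub_apply, mul_comm]
    rw [this, hu', huang_aux_dot, transpose_transpose]
    have h0 : A *ᵥ (x' - Aᵀ *ᵥ u) = 0 := by
      rw [mulVec_sub, hx', ← hu', hsol, sub_self]
    rw [h0, dotProduct_zero]
  have key : ‖X‖ ^ 2 = ‖Y‖ ^ 2 + ‖X - Y‖ ^ 2 := by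
    have hXY : Y + (X - Y) = X := by abel
    calc ‖X‖ ^ 2 = ‖Y + (X - Y)‖ ^ 2 := by rw [hXY]
      _ = ‖Y‖ ^ 2 + 2 * (inner ℝ Y (X - Y) : ℝ) + ‖X - Y‖ ^ 2 := norm_add_sq_real _ _
      _ = ‖Y‖ ^ 2 + ‖X - Y‖ ^ 2 := by rw [hinner]; ring
  nlinarith [norm_nonneg X, norm_nonneg Y, sq_nonneg ‖X - Y‖]
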